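/- arXiv:1512.03769 — 4 statements merged into one kernel-verified Lean document; each statement's English description precedes it below -/
import Mathlib

section
/- Suppose W is nonzero and irreducible, and let 0 ≤ d₁ < d₂ with D_w + d₁ I positive definite (i.e., w_j· + d₁ > 0 for all j). For i = 1, 2 let λ_{J,i} denote the largest eigenvalue of (D_w + d_i I)^{-1/2} W (D_w + d_i I)^{-1/2}. Then λ_{J,i} > 0 for i = 1, 2 and λ_{J,2} < λ_{J,1}; equivalently, λ_{J,1}^{-1} < λ_{J,2}^{-1}, so the upper bound of the admissible range for the propriety parameter ρ is strictly increasing in d. -/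
open Matrix Finset RealInnerProductSpace

section helpers
variable {n : ℕ} {A : Matrix (Fin n) (Fin n) ℝ} (hA : A.IsHermitian)

lemma quad_eq_sum (x : Fin n → ℝ) :
    x ⬝ᵥ (A *ᵥ x) = ∑ i, hA.eigenvalues i * ((⇑(hA.eigenvectorBasis i) : Fin n → ℝ) ⬝ᵥ x) ^ 2 := by
  set b : Fin n → (Fin n → ℝ) := fun i => ⇑(hA.eigenvectorBasis i) with hb
  have h := OrthonormalBasis.sum_inner_mul_inner hA.eigenvectorBasis
    ((WithLp.equiv 2 (Fin n → ℝ)).symm x) ((WithLp.equiv 2 (Fin n → ℝ)).symm (A *ᵥ x))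
  simp only [PiLp.inner_apply, RCLike.inner_apply, conj_trivial] at h
  have key : ∑ i, (∑ k, x k * b i k) * (∑ k, b i k * (A *ᵥ x) k)
      = ∑ k, x k * (A *ᵥ x) k := by simpa [b, mul_comm] using h
  have hx : ∀ i, (∑ k, x k * b i k) * (∑ k, b i k * (A *ᵥ x) k)
      = hA.eigenvalues i * (b i ⬝ᵥ x) ^ 2 := by
    intro i
    have h2 : b i ⬝ᵥ (A *ᵥ x) = (A *ᵥ b i) ⬝ᵥ x := by
      rw [dotProduct_mulVec, ← mulVec_transpose]
      congr 1
      rw [show Aᵀ = A from hA]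
    have h4 : (A *ᵥ b i) = hA.eigenvalues i • b i := hA.mulVec_eigenvectorBasis i
    have h5 : (∑ k, b i k * (A *ᵥ x) k) = hA.eigenvalues i * (b i ⬝ᵥ x) := by
      show b i ⬝ᵥ (A *ᵥ x) = _
      rw [h2, h4, smul_dotProduct, smul_eq_mul]
    have h6 : (∑ k, x k * b i k) = b i ⬝ᵥ x := dotProduct_comm x (b i)
    rw [h5, h6]; ring
  calc x ⬝ᵥ (A *ᵥ x) = ∑ k, x k * (A *ᵥ x) k := rfl
    _ = ∑ i, (∑ k, x k * b i k) * (∑ k, b i k * (A *ᵥ x) k) := key.symm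
    _ = _ := by simp_rw [hx]; rfl

lemma norm_eq_sum (x : Fin n → ℝ) :
    x ⬝ᵥ x = ∑ i, ((⇑(hA.eigenvectorBasis i) : Fin n → ℝ) ⬝ᵥ x) ^ 2 := by
  set b : Fin n → (Fin n → ℝ) := fun i => ⇑(hA.eigenvectorBasis i) with hb
  have h := OrthonormalBasis.sum_inner_mul_inner hA.eigenvectorBasis
    ((WithLp.equiv 2 (Fin n → ℝ)).symm x) ((WithLp.equiv 2 (Fin n → ℝ)).symm x)
  simp only [PiLp.inner_apply, RCLike.inner_apply, conj_trivial] at h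
  have key : ∑ i, (∑ k, x k * b i k) * (∑ k, b i k * x k) = ∑ k, x k * x k := by simpa [b, mul_comm] using h
  calc x ⬝ᵥ x = ∑ k, x k * x k := rfl
    _ = ∑ i, (∑ k, x k * b i k) * (∑ k, b i k * x k) := key.symm
    _ = _ := by
        refine Finset.sum_congr rfl fun i _ => ?_
        have h6 : (∑ k, x k * b i k) = b i ⬝ᵥ x := dotProduct_comm x (b i)
        have h7 : (∑ k, b i k * x k) = b i ⬝ᵥ x := rfl
        rw [h6, h7, sq]

lemma rayleigh_le (hn : 1 ≤ n) (x : Fin n → ℝ) :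
    x ⬝ᵥ (A *ᵥ x) ≤ (⨆ j, hA.eigenvalues j) * (x ⬝ᵥ x) := by
  have : Nonempty (Fin n) := Fin.pos_iff_nonempty.mp hn
  rw [quad_eq_sum hA, norm_eq_sum hA, Finset.mul_sum]
  refine Finset.sum_le_sum fun i _ => ?_
  exact mul_le_mul_of_nonneg_right (le_ciSup (Set.Finite.bddAbove (Set.finite_range _)) i)
    (sq_nonneg _)

lemma rayleigh_attained (hn : 1 ≤ n) :
    ∃ x : Fin n → ℝ, x ⬝ᵥ x = 1 ∧ x ⬝ᵥ (A *ᵥ x) = ⨆ j, hA.eigenvalues j := by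
  have : Nonempty (Fin n) := Fin.pos_iff_nonempty.mp hn
  obtain ⟨j0, hj0⟩ := exists_eq_ciSup_of_finite (f := hA.eigenvalues)
  set b : Fin n → ℝ := ⇑(hA.eigenvectorBasis j0) with hb
  have hnorm : b ⬝ᵥ b = 1 := by
    have h1 : ⟪hA.eigenvectorBasis j0, hA.eigenvectorBasis j0⟫ = (1 : ℝ) := by
      rw [real_inner_self_eq_norm_sq, hA.eigenvectorBasis.orthonormal.1 j0]; norm_num
    simp only [PiLp.inner_apply, RCLike.inner_apply, conj_trivial] at h1
    exact h1
  refine ⟨b, hnorm, ?_⟩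
  have h4 : (A *ᵥ b) = hA.eigenvalues j0 • b := hA.mulVec_eigenvectorBasis j0
  rw [h4, dotProduct_smul, smul_eq_mul, hnorm, mul_one, hj0]

end helpers

lemma quad_double {n : ℕ} (A : Matrix (Fin n) (Fin n) ℝ) (x y : Fin n → ℝ) :
    x ⬝ᵥ (A *ᵥ y) = ∑ i, ∑ j, x i * (A i j * y j) := by
  simp [dotProduct, mulVec, Finset.mul_sum]

/-- If `W` is nonzero, irreducible, symmetric, nonnegative with zero diagonal and
`0 ≤ d₁ < d₂` with `D_w + d₁ I` positive definite, then the largest eigenvalues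
`λ_{J,i}` of `(D_w + dᵢ I)^{-1/2} W (D_w + dᵢ I)^{-1/2}` are positive and satisfy
`λ_{J,2} < λ_{J,1}`, equivalently `λ_{J,1}⁻¹ < λ_{J,2}⁻¹`: the upper bound of the
admissible range for the propriety parameter `ρ` is strictly increasing in `d`. -/
theorem max_eigenvalue_strict_antitone_in_d
    {J : ℕ} (hJ : 1 ≤ J) (W : Matrix (Fin J) (Fin J) ℝ)
    (hWsym : W.IsSymm) (hWnonneg : ∀ i j, 0 ≤ W i j) (hWdiag : ∀ i, W i i = 0)
    (hWne : W ≠ 0)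
    (hWirred : ∀ S : Set (Fin J), S.Nonempty → S ≠ Set.univ →
      ∃ i ∈ S, ∃ j ∉ S, W i j ≠ 0)
    (w : Fin J → ℝ) (hw : ∀ j, w j = ∑ i, W j i)
    (d₁ d₂ : ℝ) (hd₁ : 0 ≤ d₁) (hd : d₁ < d₂) (hpos : ∀ j, 0 < w j + d₁)
    (M : ℝ → Matrix (Fin J) (Fin J) ℝ)
    (hM : ∀ d, M d = Matrix.diagonal (fun j => (Real.sqrt (w j + d))⁻¹) * W *
        Matrix.diagonal (fun j => (Real.sqrt (w j + d))⁻¹))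
    (h1 : (M d₁).IsHermitian) (h2 : (M d₂).IsHermitian) :
    0 < (⨆ j, h1.eigenvalues j) ∧ 0 < (⨆ j, h2.eigenvalues j) ∧
      (⨆ j, h2.eigenvalues j) < (⨆ j, h1.eigenvalues j) ∧
      (⨆ j, h1.eigenvalues j)⁻¹ < (⨆ j, h2.eigenvalues j)⁻¹ := by
  set lam1 := ⨆ j, h1.eigenvalues j with hlam1
  set lam2 := ⨆ j, h2.eigenvalues j with hlam2
  set a1 : Fin J → ℝ := fun j => (Real.sqrt (w j + d₁))⁻¹ with ha1
  set a2 : Fin J → ℝ := fun j => (Real.sqrt (w j + d₂))⁻¹ with ha2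
  have hpos2 : ∀ j, 0 < w j + d₂ := fun j => lt_trans (hpos j) (by linarith)
  have ha1pos : ∀ j, 0 < a1 j := fun j =>
    inv_pos.mpr (Real.sqrt_pos.mpr (hpos j))
  have ha2pos : ∀ j, 0 < a2 j := fun j =>
    inv_pos.mpr (Real.sqrt_pos.mpr (hpos2 j))
  have ha21 : ∀ j, a2 j < a1 j := by
    intro j
    apply inv_strictAnti₀ (Real.sqrt_pos.mpr (hpos j))
    exact Real.sqrt_lt_sqrt (le_of_lt (hpos j)) (by linarith)
  have hE1 : ∀ i j, M d₁ i j = a1 i * W i j * a1 j := by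
    intro i j; rw [hM d₁]; simp [Matrix.mul_diagonal, Matrix.diagonal_mul]; rfl
  have hE2 : ∀ i j, M d₂ i j = a2 i * W i j * a2 j := by
    intro i j; rw [hM d₂]; simp [Matrix.mul_diagonal, Matrix.diagonal_mul]; rfl
  have hWs : ∀ i j, W i j = W j i := fun i j => hWsym.apply j i
  have hE2nonneg : ∀ i j, 0 ≤ M d₂ i j := fun i j => by
    rw [hE2]
    exact mul_nonneg (mul_nonneg (le_of_lt (ha2pos i)) (hWnonneg i j)) (le_of_lt (ha2pos j))
  have hE2sym : ∀ i j, M d₂ i j = M d₂ j i := by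
    intro i j; rw [hE2, hE2, hWs i j]; ring
  have hE2diag : ∀ i, M d₂ i i = 0 := fun i => by rw [hE2, hWdiag]; ring
  -- a nonzero entry of W
  have hex : ∃ i j, W i j ≠ 0 := by
    by_contra hcon
    push_neg at hcon
    exact hWne (by ext i j; simpa using hcon i j)
  obtain ⟨i0, j0, hW0⟩ := hex
  have hW0pos : 0 < W i0 j0 := lt_of_le_of_ne (hWnonneg i0 j0) (Ne.symm hW0)
  have hne0 : i0 ≠ j0 := by
    rintro rfl; exact hW0 (hWdiag i0)
  -- positivity of lam2
  have hlam2pos : 0 < lam2 := by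
    set x : Fin J → ℝ := Pi.single i0 1 + Pi.single j0 1 with hx
    have hQ : x ⬝ᵥ (M d₂ *ᵥ x) = 2 * (M d₂ i0 j0) := by
      simp only [hx, add_dotProduct, mulVec_add, dotProduct_add, mulVec_single,
        single_dotProduct, Pi.smul_apply, op_smul_eq_mul, col_apply, mul_one, one_mul]
      rw [hE2diag i0, hE2diag j0, hE2sym j0 i0]; ring
    have hxx : x ⬝ᵥ x = 2 := by
      simp only [hx, add_dotProduct, dotProduct_add, single_dotProduct, one_mul, Pi.add_apply]
      rw [Pi.single_eq_same, Pi.single_eq_same, Pi.single_eq_of_ne hne0,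
        Pi.single_eq_of_ne (Ne.symm hne0)]
      ring
    have hM2pos : 0 < M d₂ i0 j0 := by
      rw [hE2]
      exact mul_pos (mul_pos (ha2pos i0) hW0pos) (ha2pos j0)
    have := rayleigh_le h2 hJ x
    rw [hQ, hxx] at this
    linarith
  -- the maximizer for M d₂
  obtain ⟨v, hv1, hv2⟩ := rayleigh_attained h2 hJ
  set u : Fin J → ℝ := fun k => |v k| with hu
  have hunn : ∀ k, 0 ≤ u k := fun k => abs_nonneg _
  have huu : u ⬝ᵥ u = 1 := by
    rw [← hv1]
    simp only [dotProduct, hu, abs_mul_abs_self]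
  have hQ2u_le : u ⬝ᵥ (M d₂ *ᵥ u) ≤ lam2 := by
    have := rayleigh_le h2 hJ u
    rw [huu, mul_one] at this
    exact this
  have hQ2u : u ⬝ᵥ (M d₂ *ᵥ u) = lam2 := by
    refine le_antisymm hQ2u_le ?_
    rw [hlam2, ← hv2, quad_double, quad_double]
    refine Finset.sum_le_sum fun i _ => Finset.sum_le_sum fun j _ => ?_
    calc v i * (M d₂ i j * v j) ≤ |v i * (M d₂ i j * v j)| := le_abs_self _
      _ = u i * (M d₂ i j * u j) := by
          rw [abs_mul, abs_mul, abs_of_nonneg (hE2nonneg i j)]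
  -- u is strictly positive
  have hupos : ∀ k, 0 < u k := by
    by_contra hcon
    push_neg at hcon
    obtain ⟨j, hj⟩ := hcon
    have huj : u j = 0 := le_antisymm hj (hunn j)
    have hvj : v j = 0 := abs_eq_zero.mp huj
    set S : Set (Fin J) := {i | v i ≠ 0} with hS
    have hSne : S.Nonempty := by
      by_contra hSe
      rw [Set.not_nonempty_iff_eq_empty] at hSe
      have : v = 0 := by
        funext k
        by_contra hk
        exact absurd (Set.eq_empty_iff_forall_notMem.mp hSe k) (by simpa [hS] using hk)
      rw [this] at hv1
      simp at hv1
    have hSneuniv : S ≠ Set.univ := by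
      intro hEq
      have : j ∈ S := hEq ▸ Set.mem_univ j
      exact this hvj
    obtain ⟨i, hiS, j', hj'S, hWij⟩ := hWirred S hSne hSneuniv
    -- rename: i ∈ S with v i ≠ 0, j' ∉ S with v j' = 0
    have hvj' : v j' = 0 := by simpa [hS] using hj'S
    have hui : 0 < u i := abs_pos.mpr hiS
    have huj' : u j' = 0 := by simp [hu, hvj']
    set c : ℝ := (M d₂ *ᵥ u) j' with hc
    have hWij' : 0 < W j' i := by
      rw [← hWs i j']
      exact lt_of_le_of_ne (hWnonneg i j') (Ne.symm hWij)
    have hcpos : 0 < c := by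
      have hterm : 0 < M d₂ j' i * u i := by
        apply mul_pos _ hui
        rw [hE2]
        exact mul_pos (mul_pos (ha2pos j') hWij') (ha2pos i)
      have hle : M d₂ j' i * u i ≤ ∑ k, M d₂ j' k * u k :=
        Finset.single_le_sum (f := fun k => M d₂ j' k * u k)
          (fun k _ => mul_nonneg (hE2nonneg j' k) (hunn k)) (Finset.mem_univ i)
      have : c = ∑ k, M d₂ j' k * u k := rfl
      linarith
    set ε : ℝ := c / lam2 with hε
    have hεpos : 0 < ε := div_pos hcpos hlam2pos
    set y : Fin J → ℝ := u + Pi.single j' ε with hy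
    have hAs : (M d₂ *ᵥ Pi.single j' ε) = fun i => M d₂ i j' * ε := by
      funext i; rw [mulVec_single]; rfl
    have hQy : y ⬝ᵥ (M d₂ *ᵥ y) = lam2 + 2 * ε * c := by
      simp only [hy, add_dotProduct, mulVec_add, dotProduct_add, single_dotProduct, hAs]
      have e1 : u ⬝ᵥ (fun i => M d₂ i j' * ε) = ε * c := by
        have : c = ∑ k, M d₂ j' k * u k := rfl
        rw [this, dotProduct, Finset.mul_sum]
        refine Finset.sum_congr rfl fun k _ => ?_
        rw [hE2sym k j']; ring
      have e2 : ε * (M d₂ *ᵥ u) j' = ε * c := rfl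
      have e3 : ε * (M d₂ j' j' * ε) = 0 := by rw [hE2diag]; ring
      rw [hQ2u, e1, e3, ← hc]
      ring
    have hyy : y ⬝ᵥ y = 1 + ε ^ 2 := by
      simp only [hy, add_dotProduct, dotProduct_add, single_dotProduct, dotProduct_single,
        Pi.add_apply]
      rw [huu, huj', Pi.single_eq_same]
      ring
    have hray := rayleigh_le h2 hJ y
    rw [hQy, hyy, ← hlam2] at hray
    have hkey : 2 * ε * c ≤ lam2 * ε ^ 2 := by nlinarith
    have hsub : lam2 * ε ^ 2 = c * ε := by
      rw [sq, ← mul_assoc, hε]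
      field_simp
    rw [hsub] at hkey
    linarith [mul_pos hεpos hcpos]
  -- strict comparison of quadratic forms at u
  have hstrict : u ⬝ᵥ (M d₂ *ᵥ u) < u ⬝ᵥ (M d₁ *ᵥ u) := by
    rw [quad_double, quad_double]
    have hle : ∀ i j, u i * (M d₂ i j * u j) ≤ u i * (M d₁ i j * u j) := by
      intro i j
      apply mul_le_mul_of_nonneg_left _ (hunn i)
      apply mul_le_mul_of_nonneg_right _ (hunn j)
      rw [hE1, hE2]
      have hdiff : a2 i * a2 j ≤ a1 i * a1 j :=
        (mul_lt_mul'' (ha21 i) (ha21 j) (ha2pos i).le (ha2pos j).le).le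
      nlinarith [mul_nonneg (hWnonneg i j) (sub_nonneg.mpr hdiff)]
    refine Finset.sum_lt_sum (fun i _ => Finset.sum_le_sum fun j _ => hle i j)
      ⟨i0, Finset.mem_univ i0, ?_⟩
    refine Finset.sum_lt_sum (fun j _ => hle i0 j) ⟨j0, Finset.mem_univ j0, ?_⟩
    apply mul_lt_mul_of_pos_left _ (hupos i0)
    apply mul_lt_mul_of_pos_right _ (hupos j0)
    rw [hE1, hE2]
    have hdiff : a2 i0 * a2 j0 < a1 i0 * a1 j0 :=
      mul_lt_mul'' (ha21 i0) (ha21 j0) (le_of_lt (ha2pos i0)) (le_of_lt (ha2pos j0))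
    nlinarith [mul_pos hW0pos (sub_pos.mpr hdiff)]
  have hlt : lam2 < lam1 := by
    have h1u := rayleigh_le h1 hJ u
    rw [huu, mul_one] at h1u
    calc lam2 = u ⬝ᵥ (M d₂ *ᵥ u) := hQ2u.symm
      _ < u ⬝ᵥ (M d₁ *ᵥ u) := hstrict
      _ ≤ lam1 := h1u
  exact ⟨lt_trans hlam2pos hlt, hlam2pos, hlt, inv_strictAnti₀ hlam2pos hlt⟩
end

section
/- Let D be a J×J diagonal matrix with strictly positive diagonal entries, all at most c, and let S be a J×J real symmetric positive definite matrix with spectral decomposition S = P diag(s₁, …, s_J) P^T, P orthogonal. Then for every η > 0 and x ∈ ℝ^J, writing u = P^T x, x^T (D + ηS^{-1})^{-1} x ≥ (c + η)^{-1} ∑_{j : s_j ≥ 1} u_j². Consequently, (x^T (D + ηS^{-1})^{-1} x)^{-J/2} ≤ k′ (c + η)^{J/2} with the constant k′ = (∑_{j : s_j ≥ 1} u_j²)^{-J/2}, whenever that sum is positive. -/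
open Matrix

/-- Let `D` be diagonal with strictly positive entries, all at most `c`, and let
`S = P diag(s) Pᵀ` be symmetric positive definite with `P` orthogonal.  For `η > 0`
and `x ∈ ℝ^J`, with `u = Pᵀ x`,
`xᵀ (D + ηS⁻¹)⁻¹ x ≥ (c + η)⁻¹ ∑_{j : sⱼ ≥ 1} uⱼ²`; consequently
`(xᵀ (D + ηS⁻¹)⁻¹ x)^{-J/2} ≤ k′ (c + η)^{J/2}` with
`k′ = (∑_{j : sⱼ ≥ 1} uⱼ²)^{-J/2}` whenever that sum is positive. -/
theorem quadratic_form_inv_lower_bound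
    {J : ℕ} (hJ : 1 ≤ J) (dd : Fin J → ℝ) (c : ℝ)
    (hdd : ∀ j, 0 < dd j) (hddc : ∀ j, dd j ≤ c)
    (D : Matrix (Fin J) (Fin J) ℝ) (hD : D = Matrix.diagonal dd)
    (P : Matrix (Fin J) (Fin J) ℝ) (hP : P * Pᵀ = 1) (s : Fin J → ℝ)
    (S : Matrix (Fin J) (Fin J) ℝ) (hS : S = P * Matrix.diagonal s * Pᵀ)
    (hSpd : S.PosDef) (η : ℝ) (hη : 0 < η) (x : Fin J → ℝ) :
    (c + η)⁻¹ * ∑ j ∈ Finset.univ.filter (fun j => 1 ≤ s j), ((Pᵀ *ᵥ x) j) ^ 2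
        ≤ x ⬝ᵥ ((D + η • S⁻¹)⁻¹ *ᵥ x) ∧
      (0 < ∑ j ∈ Finset.univ.filter (fun j => 1 ≤ s j), ((Pᵀ *ᵥ x) j) ^ 2 →
        (x ⬝ᵥ ((D + η • S⁻¹)⁻¹ *ᵥ x)) ^ (-(J : ℝ) / 2)
          ≤ (∑ j ∈ Finset.univ.filter (fun j => 1 ≤ s j),
              ((Pᵀ *ᵥ x) j) ^ 2) ^ (-(J : ℝ) / 2) * (c + η) ^ ((J : ℝ) / 2)) := by
  subst hD hS
  have hPt : Pᵀ * P = 1 := mul_eq_one_comm.mp hP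
  have dotP : ∀ z w : Fin J → ℝ, z ⬝ᵥ (P *ᵥ w) = (Pᵀ *ᵥ z) ⬝ᵥ w := fun z w => by
    rw [Matrix.dotProduct_mulVec, Matrix.mulVec_transpose]
  have hPv : ∀ z : Fin J → ℝ, Pᵀ *ᵥ (P *ᵥ z) = z := fun z => by
    rw [Matrix.mulVec_mulVec, hPt, Matrix.one_mulVec]
  have cancel : ∀ X : Matrix (Fin J) (Fin J) ℝ, Pᵀ * (P * X) = X := fun X => by
    rw [← Matrix.mul_assoc, hPt, Matrix.one_mul]
  -- positivity of the eigenvalues s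
  have hs : ∀ j, 0 < s j := by
    intro j
    have hz : P *ᵥ Pi.single j 1 ≠ 0 := by
      intro h
      have h2 : Pᵀ *ᵥ (P *ᵥ Pi.single j 1) = 0 := by rw [h, Matrix.mulVec_zero]
      rw [hPv] at h2
      have := congrFun h2 j
      simp at this
    have h2 := hSpd.dotProduct_mulVec_pos hz
    rw [star_trivial] at h2
    have h3 : (P *ᵥ Pi.single j 1) ⬝ᵥ ((P * Matrix.diagonal s * Pᵀ) *ᵥ (P *ᵥ Pi.single j 1))
        = s j := by
      rw [Matrix.mulVec_mulVec, Matrix.mul_assoc (P * Matrix.diagonal s) Pᵀ P, hPt,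
        Matrix.mul_one, ← Matrix.mulVec_mulVec, dotP, hPv]
      simp [Matrix.mulVec_diagonal, dotProduct, Pi.single_apply]
    rwa [h3] at h2
  -- the inverse of S
  have hSinv : (P * Matrix.diagonal s * Pᵀ)⁻¹
      = P * Matrix.diagonal (fun j => (s j)⁻¹) * Pᵀ := by
    apply Matrix.inv_eq_right_inv
    simp only [Matrix.mul_assoc]
    rw [cancel, ← Matrix.mul_assoc (Matrix.diagonal s), Matrix.diagonal_mul_diagonal]
    have : (fun j => s j * (s j)⁻¹) = fun _ => (1:ℝ) := by
      funext j; exact mul_inv_cancel₀ (hs j).ne'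
    rw [show ((fun j => s j * (s j)⁻¹) : Fin J → ℝ) = fun _ => (1:ℝ) from this]
    rw [Matrix.diagonal_one, Matrix.one_mul, hP]
  set M : Matrix (Fin J) (Fin J) ℝ :=
    Matrix.diagonal dd + η • (P * Matrix.diagonal s * Pᵀ)⁻¹ with hM
  -- M is positive definite
  have hMpd : M.PosDef := by
    refine Matrix.PosDef.add (Matrix.posDef_diagonal_iff.mpr hdd) ?_
    refine Matrix.PosDef.of_dotProduct_mulVec_pos ?_ fun z hz => ?_
    · unfold Matrix.IsHermitian
      rw [conjTranspose_smul, hSpd.inv.1]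
      simp
    · rw [smul_mulVec, dotProduct_smul]
      exact mul_pos hη (hSpd.inv.dotProduct_mulVec_pos hz)
  have hMinv : M⁻¹.PosDef := hMpd.inv
  -- square root of M⁻¹
  open scoped MatrixOrder in
  set R : Matrix (Fin J) (Fin J) ℝ := CFC.sqrt M⁻¹ with hR
  open scoped MatrixOrder in
  have hRR : R * R = M⁻¹ := CFC.sqrt_mul_sqrt_self M⁻¹ hMinv.posSemidef.nonneg
  open scoped MatrixOrder in
  have hRsym : Rᵀ = R := (CFC.sqrt_nonneg M⁻¹).posSemidef.1
  have hMdet : IsUnit M.det := hMpd.isUnit.map (MonoidHom.id _) |>.map detMonoidHom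
  have hRdet : IsUnit R.det := by
    have h1 : (0:ℝ) < M⁻¹.det := hMinv.det_pos
    have h2 : R.det * R.det = M⁻¹.det := by rw [← Matrix.det_mul, hRR]
    have : R.det ≠ 0 := by
      intro h; rw [h, mul_zero] at h2; exact h1.ne' h2.symm
    exact this.isUnit
  have hRinvsym : (R⁻¹)ᵀ = R⁻¹ := by rw [Matrix.transpose_nonsing_inv, hRsym]
  have hRinv2 : R⁻¹ * R⁻¹ = M := by
    rw [← Matrix.mul_inv_rev, hRR, Matrix.nonsing_inv_nonsing_inv _ hMdet]
  -- the test vector y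
  set u : Fin J → ℝ := Pᵀ *ᵥ x with hu
  set v : Fin J → ℝ := fun j => if 1 ≤ s j then u j else 0 with hv
  set y : Fin J → ℝ := P *ᵥ v with hy
  set T : ℝ := ∑ j ∈ Finset.univ.filter (fun j => 1 ≤ s j), (u j) ^ 2 with hT
  have hT0 : 0 ≤ T := Finset.sum_nonneg fun j _ => sq_nonneg _
  have hxy : x ⬝ᵥ y = T := by
    rw [hy, dotP, ← hu, hT, Finset.sum_filter]
    simp only [dotProduct, hv]
    congr 1; funext j
    by_cases h : 1 ≤ s j <;> simp [h, sq]
  have hvv : v ⬝ᵥ v = T := by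
    rw [hT, Finset.sum_filter]
    simp only [dotProduct, hv]
    congr 1; funext j
    by_cases h : 1 ≤ s j <;> simp [h, sq]
  -- y ⬝ M y ≤ (c+η) T
  have hyDy : y ⬝ᵥ (Matrix.diagonal dd *ᵥ y) ≤ c * T := by
    have h1 : y ⬝ᵥ (Matrix.diagonal dd *ᵥ y) = ∑ j, dd j * (y j)^2 := by
      simp only [dotProduct, Matrix.mulVec_diagonal]
      exact Finset.sum_congr rfl fun j _ => by ring
    have h2 : y ⬝ᵥ y = T := by rw [hy, dotP, hPv, hvv]
    have h3 : ∑ j, dd j * (y j)^2 ≤ ∑ j, c * (y j)^2 :=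
      Finset.sum_le_sum fun j _ => mul_le_mul_of_nonneg_right (hddc j) (sq_nonneg _)
    rw [h1]
    calc ∑ j, dd j * (y j)^2 ≤ ∑ j, c * (y j)^2 := h3
      _ = c * (y ⬝ᵥ y) := by rw [← Finset.mul_sum]; simp [dotProduct, sq]
      _ = c * T := by rw [h2]
  have hySy : y ⬝ᵥ ((P * Matrix.diagonal s * Pᵀ)⁻¹ *ᵥ y) ≤ T := by
    rw [hSinv, hy, Matrix.mulVec_mulVec, Matrix.mul_assoc (P * Matrix.diagonal (fun j => (s j)⁻¹)) Pᵀ P,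
      hPt, Matrix.mul_one, ← Matrix.mulVec_mulVec, dotP, hPv]
    have h1 : v ⬝ᵥ (Matrix.diagonal (fun j => (s j)⁻¹) *ᵥ v) = ∑ j, (s j)⁻¹ * (v j)^2 := by
      simp only [dotProduct, Matrix.mulVec_diagonal]
      exact Finset.sum_congr rfl fun j _ => by ring
    rw [h1, ← hvv]
    simp only [dotProduct]
    refine Finset.sum_le_sum fun j _ => ?_
    rcases le_or_gt 1 (s j) with h | h
    · have : (s j)⁻¹ ≤ 1 := inv_le_one_of_one_le₀ h
      calc (s j)⁻¹ * (v j)^2 ≤ 1 * (v j)^2 :=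
            mul_le_mul_of_nonneg_right this (sq_nonneg _)
        _ = v j * v j := by ring
    · simp [hv, not_le.mpr h]
  have hyMy : y ⬝ᵥ (M *ᵥ y) ≤ (c + η) * T := by
    rw [hM, Matrix.add_mulVec, dotProduct_add, smul_mulVec, dotProduct_smul,
      smul_eq_mul]
    have := mul_le_mul_of_nonneg_left hySy hη.le
    nlinarith [hyDy]
  -- Cauchy–Schwarz: T^2 ≤ (x ⬝ M⁻¹ x) * (y ⬝ M y)
  set a : Fin J → ℝ := R *ᵥ x with ha
  set b : Fin J → ℝ := R⁻¹ *ᵥ y with hb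
  have hab : a ⬝ᵥ b = T := by
    rw [ha, hb, Matrix.dotProduct_mulVec, ← Matrix.mulVec_transpose, hRinvsym,
      Matrix.mulVec_mulVec, Matrix.nonsing_inv_mul _ hRdet, Matrix.one_mulVec, hxy]
  have haa : a ⬝ᵥ a = x ⬝ᵥ (M⁻¹ *ᵥ x) := by
    rw [ha, Matrix.dotProduct_mulVec, ← Matrix.mulVec_transpose, hRsym,
      Matrix.mulVec_mulVec, hRR]
    exact dotProduct_comm _ _
  have hbb : b ⬝ᵥ b = y ⬝ᵥ (M *ᵥ y) := by
    rw [hb, Matrix.dotProduct_mulVec, ← Matrix.mulVec_transpose, hRinvsym,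
      Matrix.mulVec_mulVec, hRinv2]
    exact dotProduct_comm _ _
  have hCS : T ^ 2 ≤ (x ⬝ᵥ (M⁻¹ *ᵥ x)) * (y ⬝ᵥ (M *ᵥ y)) := by
    rw [← hab, ← haa, ← hbb]
    simpa [dotProduct, sq] using
      Finset.sum_mul_sq_le_sq_mul_sq Finset.univ a b
  have hQ0 : 0 ≤ x ⬝ᵥ (M⁻¹ *ᵥ x) := by simpa using hMinv.posSemidef.dotProduct_mulVec_nonneg x
  have hcη : 0 < c + η := add_pos (lt_of_lt_of_le (hdd ⟨0, hJ⟩) (hddc ⟨0, hJ⟩)) hη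
  have main : (c + η)⁻¹ * T ≤ x ⬝ᵥ (M⁻¹ *ᵥ x) := by
    rcases eq_or_lt_of_le hT0 with h | hTpos
    · rw [← h, mul_zero]; exact hQ0
    · have h1 : T ^ 2 ≤ (x ⬝ᵥ (M⁻¹ *ᵥ x)) * ((c + η) * T) := by
        calc T ^ 2 ≤ (x ⬝ᵥ (M⁻¹ *ᵥ x)) * (y ⬝ᵥ (M *ᵥ y)) := hCS
          _ ≤ (x ⬝ᵥ (M⁻¹ *ᵥ x)) * ((c + η) * T) :=
            mul_le_mul_of_nonneg_left hyMy hQ0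
      have h2 : T ≤ (c + η) * (x ⬝ᵥ (M⁻¹ *ᵥ x)) := by nlinarith [hTpos]
      calc (c + η)⁻¹ * T ≤ (c + η)⁻¹ * ((c + η) * (x ⬝ᵥ (M⁻¹ *ᵥ x))) :=
            mul_le_mul_of_nonneg_left h2 (inv_nonneg.mpr hcη.le)
        _ = x ⬝ᵥ (M⁻¹ *ᵥ x) := by
            rw [← mul_assoc, inv_mul_cancel₀ hcη.ne', one_mul]
  refine ⟨main, fun hTpos => ?_⟩
  have hQpos : 0 < x ⬝ᵥ (M⁻¹ *ᵥ x) :=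
    lt_of_lt_of_le (mul_pos (inv_pos.mpr hcη) hTpos) main
  have hTc : 0 < (c + η)⁻¹ * T := mul_pos (inv_pos.mpr hcη) hTpos
  have he : (-(J : ℝ) / 2) ≤ 0 := by
    apply div_nonpos_of_nonpos_of_nonneg <;> simp
  have h1 : (x ⬝ᵥ (M⁻¹ *ᵥ x)) ^ (-(J : ℝ) / 2) ≤ ((c + η)⁻¹ * T) ^ (-(J : ℝ) / 2) :=
    Real.rpow_le_rpow_of_nonpos hTc main he
  have h2 : ((c + η)⁻¹ * T) ^ (-(J : ℝ) / 2)
      = T ^ (-(J : ℝ) / 2) * (c + η) ^ ((J : ℝ) / 2) := by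
    rw [mul_comm ((c+η)⁻¹) T, Real.mul_rpow hTpos.le (inv_nonneg.mpr hcη.le),
      Real.inv_rpow hcη.le, ← Real.rpow_neg hcη.le]
    congr 1
    ring
  rw [h2] at h1
  exact h1
end

section
/- Let D be a J×J diagonal matrix whose diagonal entries are all at least b > 0, and let S be a J×J real symmetric positive definite matrix with eigenvalues s₁, …, s_J. Then for every η > 0, det(D + ηS^{-1}) ≥ ∏_{j=1}^J (b s_j + η)/s_j ≥ (b + η)^J / ∏_{j=1}^J max{s_j, 1}. Consequently, det(D + ηS^{-1})^{-1/2} ≤ (b + η)^{-J/2} ∏_{j=1}^J max{s_j, 1}^{1/2}. -/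
open Matrix

variable {n : Type*} [Fintype n] [DecidableEq n]

lemma my_one_le_det_one_add {M : Matrix n n ℝ} (hM : M.PosSemidef) :
    1 ≤ (1 + M).det := by
  have hH := hM.1
  have hspec := hH.spectral_theorem
  rw [Unitary.conjStarAlgAut_apply] at hspec
  set U : Matrix n n ℝ := (hH.eigenvectorUnitary : Matrix n n ℝ) with hUdef
  set Dg : Matrix n n ℝ := diagonal (RCLike.ofReal ∘ hH.eigenvalues) with hDg
  have hU1 : U * star U = 1 := (Matrix.mem_unitaryGroup_iff).mp hH.eigenvectorUnitary.2
  have key : (1 : Matrix n n ℝ) + M = U * (1 + Dg) * star U := by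
    rw [Matrix.mul_add, Matrix.add_mul, Matrix.mul_one, hU1, ← hspec]
  rw [key, det_mul, det_mul]
  have hdetU : U.det * (star U).det = 1 := by
    rw [← det_mul, hU1, det_one]
  have h1 : ((1 : Matrix n n ℝ) + Dg).det = ∏ i, (1 + hH.eigenvalues i) := by
    rw [hDg, ← Matrix.diagonal_one, diagonal_add, det_diagonal]
    simp [RCLike.ofReal]
  calc (1:ℝ) = 1 * (U.det * (star U).det) := by rw [hdetU, mul_one]
    _ ≤ ((1 : Matrix n n ℝ) + Dg).det * (U.det * (star U).det) := by
        rw [hdetU, mul_one, mul_one, h1]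
        calc (1:ℝ) = ∏ _i : n, (1:ℝ) := by simp
          _ ≤ ∏ i, (1 + hH.eigenvalues i) :=
            Finset.prod_le_prod (fun i _ => by norm_num)
              (fun i _ => by linarith [hM.eigenvalues_nonneg i])
    _ = U.det * ((1 : Matrix n n ℝ) + Dg).det * (star U).det := by ring

lemma my_det_le_det_add {A B : Matrix n n ℝ} (hA : A.PosDef) (hB : B.PosSemidef) :
    A.det ≤ (A + B).det := by
  obtain ⟨C, hC⟩ : ∃ C : Matrix n n ℝ, B = star C * C := by
    open scoped MatrixOrder in
    exact CStarAlgebra.nonneg_iff_eq_star_mul_self.mp hB.nonneg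
  obtain rfl : B = Cᴴ * C := hC
  have hdetA : IsUnit A.det := hA.det_pos.ne'.isUnit
  have h1 : A + Cᴴ * C = A * (1 + A⁻¹ * (Cᴴ * C)) := by
    rw [Matrix.mul_add, Matrix.mul_one, ← Matrix.mul_assoc, Matrix.mul_nonsing_inv _ hdetA,
      Matrix.one_mul]
  rw [h1, det_mul]
  have h2 : (1 + A⁻¹ * (Cᴴ * C)).det = (1 + C * (A⁻¹ * Cᴴ)).det := by
    rw [← Matrix.mul_assoc, Matrix.det_one_add_mul_comm]
  have h3 : (C * (A⁻¹ * Cᴴ)).PosSemidef := by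
    have := hA.inv.posSemidef.mul_mul_conjTranspose_same C
    rwa [Matrix.mul_assoc] at this
  nlinarith [my_one_le_det_one_add h3, hA.det_pos, h2]

lemma my_posDef_conj {A U : Matrix n n ℝ} (hA : A.PosDef) (hU : U * Uᵀ = 1) :
    (Uᵀ * A * U).PosDef := by
  have hU' : Uᵀ * U = 1 := mul_eq_one_comm.mp hU
  constructor
  · have hAh : Aᵀ = A := hA.1
    show (Uᵀ * A * U)ᴴ = Uᵀ * A * U
    simp only [conjTranspose_eq_transpose_of_trivial, Matrix.transpose_mul,
      Matrix.transpose_transpose, hAh, Matrix.mul_assoc]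
  · have hinj : Function.Injective U.mulVec := fun x y h => by
      have := congrArg (Uᵀ *ᵥ ·) h
      simpa only [mulVec_mulVec, hU', one_mulVec] using this
    have := hA.conjTranspose_mul_mul_same hinj
    rw [conjTranspose_eq_transpose_of_trivial] at this
    exact this.2

/-- Let `D` be diagonal with all diagonal entries at least `b > 0`, and let
`S = P diag(s) Pᵀ` be symmetric positive definite with `P` orthogonal. For `η > 0`,
`det(D + ηS⁻¹) ≥ ∏ⱼ (b sⱼ + η)/sⱼ ≥ (b + η)^J / ∏ⱼ max{sⱼ, 1}`, and consequently
`det(D + ηS⁻¹)^{-1/2} ≤ (b + η)^{-J/2} ∏ⱼ max{sⱼ, 1}^{1/2}`. -/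
theorem det_lower_bound_and_inv_sqrt_upper_bound
    {J : ℕ} (hJ : 1 ≤ J) (dd : Fin J → ℝ) (b : ℝ) (hb : 0 < b)
    (hdd : ∀ j, b ≤ dd j)
    (D : Matrix (Fin J) (Fin J) ℝ) (hD : D = Matrix.diagonal dd)
    (P : Matrix (Fin J) (Fin J) ℝ) (hP : P * Pᵀ = 1) (s : Fin J → ℝ)
    (S : Matrix (Fin J) (Fin J) ℝ) (hS : S = P * Matrix.diagonal s * Pᵀ)
    (hSpd : S.PosDef) (η : ℝ) (hη : 0 < η) :
    (∏ j, (b * s j + η) / s j ≤ (D + η • S⁻¹).det) ∧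
      ((b + η) ^ J / ∏ j, max (s j) 1 ≤ ∏ j, (b * s j + η) / s j) ∧
      ((D + η • S⁻¹).det ^ (-(1 : ℝ) / 2)
        ≤ (b + η) ^ (-(J : ℝ) / 2) * ∏ j, (max (s j) 1) ^ ((1 : ℝ) / 2)) := by
  classical
  have hPt : Pᵀ * P = 1 := mul_eq_one_comm.mp hP
  -- positivity of s
  have hdiag : Matrix.diagonal s = Pᵀ * S * P := by
    rw [hS]
    symm
    calc Pᵀ * (P * Matrix.diagonal s * Pᵀ) * P
        = Pᵀ * P * Matrix.diagonal s * (Pᵀ * P) := by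
          simp only [Matrix.mul_assoc]
      _ = Matrix.diagonal s := by rw [hPt]; simp
  have hdiagPD : (Matrix.diagonal s).PosDef := by
    rw [hdiag]; exact my_posDef_conj hSpd hP
  have hs : ∀ j, 0 < s j := posDef_diagonal_iff.mp hdiagPD
  -- inverse of S
  have hSinv : S⁻¹ = P * Matrix.diagonal (fun j => (s j)⁻¹) * Pᵀ := by
    apply Matrix.inv_eq_right_inv
    rw [hS]
    calc P * Matrix.diagonal s * Pᵀ * (P * Matrix.diagonal (fun j => (s j)⁻¹) * Pᵀ)
        = P * (Matrix.diagonal s * (Pᵀ * P) * Matrix.diagonal (fun j => (s j)⁻¹)) * Pᵀ := by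
          simp only [Matrix.mul_assoc]
      _ = P * (Matrix.diagonal s * Matrix.diagonal (fun j => (s j)⁻¹)) * Pᵀ := by
          rw [hPt]; simp [Matrix.mul_assoc]
      _ = P * Pᵀ := by
          rw [Matrix.diagonal_mul_diagonal]
          have : (fun j => s j * (s j)⁻¹) = fun _ => (1:ℝ) := by
            funext j; exact mul_inv_cancel₀ (hs j).ne'
          rw [this, Matrix.diagonal_one, Matrix.mul_one]
      _ = 1 := hP
  -- the matrices A (posdef part) and B (psd remainder)
  set c : Fin J → ℝ := fun j => b + η * (s j)⁻¹ with hc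
  have hcpos : ∀ j, 0 < c j :=
    fun j => add_pos hb (mul_pos hη (inv_pos.mpr (hs j)))
  have hdc : Matrix.diagonal c
      = b • (1 : Matrix (Fin J) (Fin J) ℝ)
        + η • Matrix.diagonal (fun j => (s j)⁻¹) := by
    ext i k
    by_cases h : i = k
    · subst h; simp [Matrix.diagonal_apply, Matrix.one_apply, hc]
    · simp [Matrix.diagonal_apply_ne _ h, Matrix.one_apply_ne h]
  have hA : P * Matrix.diagonal c * Pᵀ
      = b • (1 : Matrix (Fin J) (Fin J) ℝ) + η • S⁻¹ := by
    rw [hdc, hSinv, Matrix.mul_add, Matrix.add_mul]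
    rw [Matrix.mul_smul, Matrix.smul_mul, Matrix.mul_smul, Matrix.smul_mul,
      Matrix.mul_one, hP]
  have hApd : (P * Matrix.diagonal c * Pᵀ).PosDef := by
    have hU : Pᵀ * Pᵀᵀ = 1 := by rw [Matrix.transpose_transpose, hPt]
    have := my_posDef_conj (Matrix.PosDef.diagonal hcpos) hU
    rwa [Matrix.transpose_transpose] at this
  have hdetA : (P * Matrix.diagonal c * Pᵀ).det = ∏ j, c j := by
    rw [Matrix.det_mul, Matrix.det_mul, Matrix.det_diagonal]
    have h1 : P.det * Pᵀ.det = 1 := by rw [← Matrix.det_mul, hP, Matrix.det_one]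
    calc P.det * (∏ j, c j) * Pᵀ.det = (∏ j, c j) * (P.det * Pᵀ.det) := by ring
      _ = ∏ j, c j := by rw [h1, mul_one]
  have hBpsd : (Matrix.diagonal (fun j => dd j - b)).PosSemidef :=
    Matrix.posSemidef_diagonal_iff.mpr fun j => sub_nonneg.mpr (hdd j)
  have hsplit : D + η • S⁻¹
      = P * Matrix.diagonal c * Pᵀ + Matrix.diagonal (fun j => dd j - b) := by
    rw [hA, hD]
    ext i k
    by_cases h : i = k
    · subst h; simp [Matrix.diagonal_apply, Matrix.one_apply]; ring
    · simp [Matrix.diagonal_apply_ne _ h, Matrix.one_apply_ne h]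
  have hprod_eq : ∏ j, (b * s j + η) / s j = ∏ j, c j := by
    refine Finset.prod_congr rfl fun j _ => ?_
    have hne : s j ≠ 0 := (hs j).ne'
    rw [hc]
    field_simp
  -- first inequality
  have first : ∏ j, (b * s j + η) / s j ≤ (D + η • S⁻¹).det := by
    rw [hprod_eq, hsplit, ← hdetA]
    exact my_det_le_det_add hApd hBpsd
  -- second inequality
  have hmaxpos : ∀ j, (0:ℝ) < max (s j) 1 := fun j => lt_max_of_lt_right one_pos
  have termwise : ∀ j, (b + η) / max (s j) 1 ≤ (b * s j + η) / s j := by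
    intro j
    rw [div_le_div_iff₀ (hmaxpos j) (hs j)]
    rcases max_cases (s j) 1 with ⟨he, h1⟩ | ⟨he, h1⟩ <;> rw [he]
    · nlinarith [mul_nonneg (mul_nonneg hb.le (sub_nonneg.mpr h1)) (hs j).le]
    · nlinarith [hs j, hη, hb]
  have second : (b + η) ^ J / ∏ j, max (s j) 1 ≤ ∏ j, (b * s j + η) / s j := by
    have hrw : (b + η) ^ J / ∏ j, max (s j) 1
        = ∏ j, (b + η) / max (s j) 1 := by
      rw [Finset.prod_div_distrib, Finset.prod_const, Finset.card_univ,
        Fintype.card_fin]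
    rw [hrw]
    exact Finset.prod_le_prod
      (fun j _ => div_nonneg (by linarith) (hmaxpos j).le)
      (fun j _ => termwise j)
  refine ⟨first, second, ?_⟩
  -- third part
  set L : ℝ := (b + η) ^ J / ∏ j, max (s j) 1 with hLdef
  have hprodmaxpos : 0 < ∏ j, max (s j) 1 := Finset.prod_pos fun j _ => hmaxpos j
  have hbη : (0:ℝ) < b + η := by linarith
  have hLpos : 0 < L := div_pos (pow_pos hbη J) hprodmaxpos
  have hLle : L ≤ (D + η • S⁻¹).det := le_trans second first
  have step : (D + η • S⁻¹).det ^ (-(1:ℝ)/2) ≤ L ^ (-(1:ℝ)/2) :=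
    Real.rpow_le_rpow_of_nonpos hLpos hLle (by norm_num)
  refine step.trans (le_of_eq ?_)
  rw [hLdef, Real.div_rpow (pow_pos hbη J).le hprodmaxpos.le]
  have e1 : ((b + η) ^ J) ^ (-(1:ℝ)/2) = (b + η) ^ (-(J:ℝ)/2) := by
    rw [← Real.rpow_natCast (b + η) J, ← Real.rpow_mul hbη.le]
    congr 1
    ring
  have e2 : (∏ j, max (s j) 1) ^ (-(1:ℝ)/2)
      = ((∏ j, max (s j) 1) ^ ((1:ℝ)/2))⁻¹ := by
    rw [show (-(1:ℝ)/2) = -(1/2 : ℝ) by norm_num, Real.rpow_neg hprodmaxpos.le]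
  rw [e1, e2, div_eq_mul_inv, inv_inv, ← Real.finset_prod_rpow _ _ (fun j _ => (hmaxpos j).le)]
end

section
/- For Lebesgue-almost every y ∈ ℝ^J, ∫_{1/ν₁}^{1/ν_J} ∫₀^∞ (1 + η)^{-2} · det(I + η(D*_w − ρW)^{-1})^{-1/2} · (y^T (I + η(D*_w − ρW)^{-1})^{-1} y)^{-J/2} dη dρ < ∞. That is, the joint marginal over (η, ρ) of the data density under the all-ones indicator configuration γ = 𝟙, after integrating out μ and σ², is finite almost everywhere in y. -/
open Matrix MeasureTheory

namespace CARAux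

variable {n : Type*} [Fintype n] [DecidableEq n]

/-- conjugation by U of a diagonal -/
noncomputable def conj (U : Matrix n n ℝ) (f : n → ℝ) : Matrix n n ℝ :=
  U * Matrix.diagonal f * star U

lemma conj_mul {U : Matrix n n ℝ} (hU : star U * U = 1) (f g : n → ℝ) :
    conj U f * conj U g = conj U (f * g) := by
  simp only [conj]
  rw [show U * Matrix.diagonal f * star U * (U * Matrix.diagonal g * star U)
      = U * (Matrix.diagonal f * (star U * U) * Matrix.diagonal g) * star U by
    noncomm_ring, hU, mul_one, Matrix.diagonal_mul_diagonal]
  rfl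

lemma conj_add (U : Matrix n n ℝ) (f g : n → ℝ) :
    conj U f + conj U g = conj U (f + g) := by
  simp only [conj]
  have : Matrix.diagonal (f + g) = Matrix.diagonal f + Matrix.diagonal g :=
    (Matrix.diagonal_add f g).symm
  rw [this]; noncomm_ring

lemma conj_smul (U : Matrix n n ℝ) (c : ℝ) (f : n → ℝ) :
    c • conj U f = conj U (c • f) := by
  simp only [conj, Matrix.diagonal_smul]
  rw [Matrix.mul_smul, Matrix.smul_mul]

lemma conj_one {U : Matrix n n ℝ} (hU' : U * star U = 1) :
    conj U 1 = 1 := by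
  have : Matrix.diagonal (1 : n → ℝ) = (1 : Matrix n n ℝ) := Matrix.diagonal_one
  rw [conj, this, mul_one, hU']

lemma conj_det {U : Matrix n n ℝ} (hU' : U * star U = 1) (f : n → ℝ) :
    (conj U f).det = ∏ i, f i := by
  have h : U.det * (star U).det = 1 := by rw [← Matrix.det_mul, hU', Matrix.det_one]
  rw [conj, Matrix.det_mul, Matrix.det_mul, Matrix.det_diagonal]
  calc U.det * (∏ i, f i) * (star U).det = (∏ i, f i) * (U.det * (star U).det) := by ring
    _ = ∏ i, f i := by rw [h, mul_one]

lemma conj_inv {U : Matrix n n ℝ} (hU : star U * U = 1) (hU' : U * star U = 1)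
    {f : n → ℝ} (hf : ∀ i, f i ≠ 0) :
    (conj U f)⁻¹ = conj U f⁻¹ := by
  apply Matrix.inv_eq_right_inv
  rw [conj_mul hU]
  have : f * f⁻¹ = 1 := funext fun i => mul_inv_cancel₀ (hf i)
  rw [this, conj_one hU']

lemma conj_quad (U : Matrix n n ℝ) (f : n → ℝ) (y : n → ℝ) :
    y ⬝ᵥ (conj U f) *ᵥ y = ∑ i, f i * ((star U *ᵥ y) i) ^ 2 := by
  have hsU : star U = Uᵀ := by
    ext i j; simp [Matrix.star_apply]
  rw [conj, ← Matrix.mulVec_mulVec, ← Matrix.mulVec_mulVec, Matrix.dotProduct_mulVec y U,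
    ← Matrix.mulVec_transpose, ← hsU]
  simp [dotProduct, Matrix.mulVec_diagonal, pow_two]
  ring_nf
  congr 1
  ext i
  ring

lemma spectral_real {A : Matrix n n ℝ} (hA : A.IsHermitian) :
    A = conj (hA.eigenvectorUnitary : Matrix n n ℝ) hA.eigenvalues := by
  have := hA.spectral_theorem
  rwa [RCLike.ofReal_real_eq_id, Function.id_comp] at this

lemma unitary_left {A : Matrix n n ℝ} (hA : A.IsHermitian) :
    star (hA.eigenvectorUnitary : Matrix n n ℝ) * (hA.eigenvectorUnitary : Matrix n n ℝ) = 1 :=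
  hA.eigenvectorUnitary.2.1

lemma unitary_right {A : Matrix n n ℝ} (hA : A.IsHermitian) :
    (hA.eigenvectorUnitary : Matrix n n ℝ) * star (hA.eigenvectorUnitary : Matrix n n ℝ) = 1 :=
  hA.eigenvectorUnitary.2.2


lemma trace_eq_sum_eigen {A : Matrix n n ℝ} (hA : A.IsHermitian) :
    A.trace = ∑ i, hA.eigenvalues i := by
  conv_lhs => rw [spectral_real hA]
  rw [conj, Matrix.trace_mul_cycle, unitary_left hA, Matrix.one_mul, Matrix.trace_diagonal]

lemma quad_eq {A : Matrix n n ℝ} (hA : A.IsHermitian) (y : n → ℝ) :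
    y ⬝ᵥ A *ᵥ y = ∑ i, hA.eigenvalues i *
      ((star (hA.eigenvectorUnitary : Matrix n n ℝ) *ᵥ y) i) ^ 2 := by
  conv_lhs => rw [spectral_real hA]
  rw [conj_quad]

lemma dot_self_eq {A : Matrix n n ℝ} (hA : A.IsHermitian) (y : n → ℝ) :
    y ⬝ᵥ y = ∑ i, ((star (hA.eigenvectorUnitary : Matrix n n ℝ) *ᵥ y) i) ^ 2 := by
  have h1 : y ⬝ᵥ y = y ⬝ᵥ (conj (hA.eigenvectorUnitary : Matrix n n ℝ) 1) *ᵥ y := by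
    rw [conj_one (unitary_right hA), Matrix.one_mulVec]
  rw [h1, conj_quad]
  simp

lemma rayleigh_le {A : Matrix n n ℝ} (hA : A.IsHermitian) {c ρ : ℝ}
    (h : ∀ i, ρ * hA.eigenvalues i ≤ c) (x : n → ℝ) :
    ρ * (x ⬝ᵥ A *ᵥ x) ≤ c * (x ⬝ᵥ x) := by
  rw [quad_eq hA, dot_self_eq hA, Finset.mul_sum, Finset.mul_sum]
  refine Finset.sum_le_sum fun i _ => ?_
  have h2 : (0:ℝ) ≤ ((star (hA.eigenvectorUnitary : Matrix n n ℝ) *ᵥ x) i) ^ 2 := sq_nonneg _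
  calc ρ * (hA.eigenvalues i * ((star (hA.eigenvectorUnitary : Matrix n n ℝ) *ᵥ x) i) ^ 2)
      = (ρ * hA.eigenvalues i) * ((star (hA.eigenvectorUnitary : Matrix n n ℝ) *ᵥ x) i) ^ 2 := by
        ring
    _ ≤ c * ((star (hA.eigenvectorUnitary : Matrix n n ℝ) *ᵥ x) i) ^ 2 :=
        mul_le_mul_of_nonneg_right (h i) h2

lemma key [Nonempty n] {A : Matrix n n ℝ} (hA : A.IsHermitian)
    (hpos : ∀ i, 0 < hA.eigenvalues i) {T c η : ℝ}
    (hT : ∀ i, hA.eigenvalues i ≤ T) (hc : 0 < c) (hη : 0 < η) {y : n → ℝ}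
    (hcy : c ≤ y ⬝ᵥ A *ᵥ y) :
    ((1 : Matrix n n ℝ) + η • A⁻¹).det ^ (-(1:ℝ)/2) *
      (y ⬝ᵥ (((1 : Matrix n n ℝ) + η • A⁻¹)⁻¹ *ᵥ y)) ^ (-(Fintype.card n : ℝ)/2)
      ≤ (T / c) ^ ((Fintype.card n : ℝ)/2) := by
  obtain ⟨i₀⟩ := (inferInstance : Nonempty n)
  have hT0 : (0:ℝ) < T := (hpos i₀).trans_le (hT i₀)
  set μ := hA.eigenvalues with hμ
  set U := (hA.eigenvectorUnitary : Matrix n n ℝ) with hUdef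
  have hUl := unitary_left hA
  have hUr := unitary_right hA
  set g : n → ℝ := fun i => 1 + η * (μ i)⁻¹ with hg
  have hg_ge : ∀ i, 1 + η / T ≤ g i := by
    intro i
    have h1 : T⁻¹ ≤ (μ i)⁻¹ := inv_anti₀ (hpos i) (hT i)
    have : η / T = η * T⁻¹ := div_eq_mul_inv η T
    rw [hg, this]
    have := mul_le_mul_of_nonneg_left h1 hη.le
    linarith
  have hβ : (0:ℝ) < 1 + η / T := by positivity
  have hg_pos : ∀ i, 0 < g i := fun i => lt_of_lt_of_le hβ (hg_ge i)
  have hAinv : A⁻¹ = conj U μ⁻¹ := by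
    conv_lhs => rw [spectral_real hA]
    exact conj_inv hUl hUr (fun i => (hpos i).ne')
  have hB : (1 : Matrix n n ℝ) + η • A⁻¹ = conj U g := by
    rw [hAinv, conj_smul, ← conj_one hUr, conj_add]
    exact congrArg (conj U) (funext fun i => by simp [hg])
  have hdet : ((1 : Matrix n n ℝ) + η • A⁻¹).det = ∏ i, g i := by
    rw [hB, conj_det hUr]
  have hdet_ge : (1 + η / T) ^ (Fintype.card n) ≤ ∏ i, g i := by
    calc (1 + η / T) ^ (Fintype.card n) = ∏ _i : n, (1 + η / T) := by
          rw [Finset.prod_const, Finset.card_univ]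
      _ ≤ ∏ i, g i := Finset.prod_le_prod (fun i _ => hβ.le) (fun i _ => hg_ge i)
  have hBinv : ((1 : Matrix n n ℝ) + η • A⁻¹)⁻¹ = conj U g⁻¹ := by
    rw [hB, conj_inv hUl hUr (fun i => (hg_pos i).ne')]
  set z := star U *ᵥ y with hz
  have hQ : y ⬝ᵥ (((1 : Matrix n n ℝ) + η • A⁻¹)⁻¹ *ᵥ y) = ∑ i, (g i)⁻¹ * z i ^ 2 := by
    rw [hBinv, conj_quad]
    rfl
  have hyA : y ⬝ᵥ A *ᵥ y = ∑ i, μ i * z i ^ 2 := quad_eq hA y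
  have hTη : (0:ℝ) < T + η := by linarith
  have hQge : c / (T + η) ≤ y ⬝ᵥ (((1 : Matrix n n ℝ) + η • A⁻¹)⁻¹ *ᵥ y) := by
    rw [hQ]
    have h1 : ∀ i ∈ Finset.univ, μ i * z i ^ 2 / (T + η) ≤ (g i)⁻¹ * z i ^ 2 := by
      intro i _
      have hμi := hpos i
      have hgi : (g i)⁻¹ = μ i / (μ i + η) := by
        rw [hg]
        field_simp
      rw [hgi]
      have hd : μ i / (T + η) ≤ μ i / (μ i + η) :=
        div_le_div_of_nonneg_left hμi.le (by linarith) (by linarith [hT i])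
      calc μ i * z i ^ 2 / (T + η) = (μ i / (T + η)) * z i ^ 2 := by ring
        _ ≤ (μ i / (μ i + η)) * z i ^ 2 := mul_le_mul_of_nonneg_right hd (sq_nonneg _)
    calc c / (T + η) ≤ (∑ i, μ i * z i ^ 2) / (T + η) :=
          (div_le_div_iff_of_pos_right hTη).mpr (by rw [← hyA]; exact hcy)
      _ = ∑ i, μ i * z i ^ 2 / (T + η) := Finset.sum_div _ _ _
      _ ≤ ∑ i, (g i)⁻¹ * z i ^ 2 := Finset.sum_le_sum h1
  have hQpos : (0:ℝ) < c / (T + η) := div_pos hc hTη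
  set J' := Fintype.card n with hJ'
  have e1 : ((1 : Matrix n n ℝ) + η • A⁻¹).det ^ (-(1:ℝ)/2)
      ≤ ((1 + η / T) ^ J') ^ (-(1:ℝ)/2) := by
    rw [hdet]
    exact Real.rpow_le_rpow_of_nonpos (by positivity) hdet_ge (by norm_num)
  have e2 : (y ⬝ᵥ (((1 : Matrix n n ℝ) + η • A⁻¹)⁻¹ *ᵥ y)) ^ (-(J':ℝ)/2)
      ≤ (c / (T + η)) ^ (-(J':ℝ)/2) := by
    apply Real.rpow_le_rpow_of_nonpos hQpos hQge
    have : (0:ℝ) ≤ (J':ℝ) := Nat.cast_nonneg _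
    linarith
  have hcomb : ((1 + η / T) ^ J') ^ (-(1:ℝ)/2) * (c / (T + η)) ^ (-(J':ℝ)/2)
      = (T / c) ^ ((J':ℝ)/2) := by
    have hx : (1:ℝ) + η / T = (T + η) / T := by field_simp
    rw [hx]
    have h1 : (((T + η) / T) ^ J') ^ (-(1:ℝ)/2) = (((T + η) / T) ^ ((J':ℝ)/2))⁻¹ := by
      rw [← Real.rpow_natCast ((T + η) / T) J', ← Real.rpow_mul (by positivity),
        ← Real.rpow_neg (by positivity)]
      congr 1
      ring
    have h2 : (c / (T + η)) ^ (-(J':ℝ)/2) = ((c / (T + η)) ^ ((J':ℝ)/2))⁻¹ := by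
      rw [← Real.rpow_neg hQpos.le]
      congr 1
      ring
    rw [h1, h2, ← mul_inv, ← Real.mul_rpow (by positivity) hQpos.le,
      ← Real.inv_rpow (by positivity)]
    congr 1
    field_simp
  calc ((1 : Matrix n n ℝ) + η • A⁻¹).det ^ (-(1:ℝ)/2) *
        (y ⬝ᵥ (((1 : Matrix n n ℝ) + η • A⁻¹)⁻¹ *ᵥ y)) ^ (-(J':ℝ)/2)
      ≤ ((1 + η / T) ^ J') ^ (-(1:ℝ)/2) * (c / (T + η)) ^ (-(J':ℝ)/2) := by
        apply mul_le_mul e1 e2 ?_ ?_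
        · apply Real.rpow_nonneg
          exact le_trans (by positivity : (0:ℝ) ≤ c / (T+η)) hQge
        · positivity
    _ = (T / c) ^ ((J':ℝ)/2) := hcomb

set_option linter.unusedSectionVars false


lemma endpoint_nonneg_left {a b u v : ℝ} (hab : a < b)
    (h : ∀ ρ ∈ Set.Ioo a b, 0 ≤ u - ρ * v) : 0 ≤ u - a * v := by
  by_contra hneg
  push_neg at hneg
  rcases le_or_gt 0 v with hv | hv
  · have h1 := h ((a + b) / 2) ⟨by linarith, by linarith⟩
    nlinarith
  · set ρ := a + min ((b - a) / 2) ((u - a * v) / (2 * v)) with hρ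
    have hm1 : (0:ℝ) < (b - a) / 2 := by linarith
    have hm2 : (0:ℝ) < (u - a * v) / (2 * v) := div_pos_of_neg_of_neg (by linarith) (by linarith)
    have hρa : a < ρ := by rw [hρ]; have := lt_min hm1 hm2; linarith
    have hρb : ρ < b := by
      rw [hρ]; have := min_le_left ((b - a) / 2) ((u - a * v) / (2 * v)); linarith
    have h1 := h ρ ⟨hρa, hρb⟩
    have h2 : ρ - a ≤ (u - a * v) / (2 * v) := by rw [hρ]; simp
    clear_value ρ
    have h3 : (u - a * v) / (2 * v) * v = (u - a * v) / 2 := by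
      field_simp [hv.ne]
    have h4 : (u - a * v) / 2 ≤ (ρ - a) * v := by
      have := mul_le_mul_of_nonpos_right h2 hv.le
      rwa [h3] at this
    nlinarith [h4, h1, hneg]

lemma endpoint_nonneg_right {a b u v : ℝ} (hab : a < b)
    (h : ∀ ρ ∈ Set.Ioo a b, 0 ≤ u - ρ * v) : 0 ≤ u - b * v := by
  by_contra hneg
  push_neg at hneg
  rcases le_or_gt v 0 with hv | hv
  · have h1 := h ((a + b) / 2) ⟨by linarith, by linarith⟩
    nlinarith
  · set ρ := b - min ((b - a) / 2) ((b * v - u) / (2 * v)) with hρ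
    have hm1 : (0:ℝ) < (b - a) / 2 := by linarith
    have hm2 : (0:ℝ) < (b * v - u) / (2 * v) := div_pos (by linarith) (by linarith)
    have hρb : ρ < b := by rw [hρ]; have := lt_min hm1 hm2; linarith
    have hρa : a < ρ := by
      rw [hρ]; have := min_le_left ((b - a) / 2) ((b * v - u) / (2 * v)); linarith
    have h1 := h ρ ⟨hρa, hρb⟩
    have h2 : b - ρ ≤ (b * v - u) / (2 * v) := by rw [hρ]; simp
    clear_value ρ
    have h3 : (b * v - u) / (2 * v) * v = (b * v - u) / 2 := by
      field_simp [hv.ne']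
    have h4 : (b - ρ) * v ≤ (b * v - u) / 2 := by
      have := mul_le_mul_of_nonneg_right h2 hv.le
      rwa [h3] at this
    nlinarith [h4, h1, hneg]

lemma dot_sym_mul {S M : Matrix n n ℝ} (hS : Sᵀ = S) (x : n → ℝ) :
    x ⬝ᵥ (S * M * S) *ᵥ x = (S *ᵥ x) ⬝ᵥ M *ᵥ (S *ᵥ x) := by
  rw [← Matrix.mulVec_mulVec, ← Matrix.mulVec_mulVec, Matrix.dotProduct_mulVec x S,
    ← Matrix.mulVec_transpose, hS]

lemma expand_dot (D W : Matrix n n ℝ) (ρ : ℝ) (x : n → ℝ) :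
    x ⬝ᵥ (D - ρ • W) *ᵥ x = x ⬝ᵥ D *ᵥ x - ρ * (x ⬝ᵥ W *ᵥ x) := by
  rw [Matrix.sub_mulVec, Matrix.smul_mulVec, dotProduct_sub, dotProduct_smul,
    smul_eq_mul]

end CARAux

/-- Finiteness (for almost every `y`) of the joint marginal over `(η, ρ)` of the data
density under the all-ones indicator configuration `γ = 𝟙`, after integrating out `μ`
and `σ²`:
`∫_{1/ν₁}^{1/ν_J} ∫₀^∞ (1+η)^{-2} det(I + η(D*_w − ρW)⁻¹)^{-1/2}
  (yᵀ(I + η(D*_w − ρW)⁻¹)⁻¹y)^{-J/2} dη dρ < ∞`. -/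
theorem marginal_allones_integral_finite
    {J : ℕ} (hJ : 1 ≤ J) (W : Matrix (Fin J) (Fin J) ℝ)
    (hWsym : W.IsSymm) (hWnonneg : ∀ i j, 0 ≤ W i j) (hWdiag : ∀ i, W i i = 0)
    (hWne : W ≠ 0) (d : ℝ) (hd : 0 ≤ d)
    (Dstar : Matrix (Fin J) (Fin J) ℝ)
    (hDstar : Dstar = Matrix.diagonal (fun j => (∑ i, W j i) + d))
    (hDpd : Dstar.PosDef)
    (Wstar : Matrix (Fin J) (Fin J) ℝ)
    (hWstar : Wstar = Matrix.diagonal (fun j => (Real.sqrt ((∑ i, W j i) + d))⁻¹) * W *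
        Matrix.diagonal (fun j => (Real.sqrt ((∑ i, W j i) + d))⁻¹))
    (hH : Wstar.IsHermitian)
    (hν1 : (⨅ j, hH.eigenvalues j) < 0) (hνJ : 0 < (⨆ j, hH.eigenvalues j)) :
    ∀ᵐ y : Fin J → ℝ,
      (∫⁻ ρ in Set.Ioo (⨅ j, hH.eigenvalues j)⁻¹ (⨆ j, hH.eigenvalues j)⁻¹,
        ∫⁻ η in Set.Ioi (0 : ℝ),
          ENNReal.ofReal (((1 + η) ^ 2)⁻¹ *
            ((1 : Matrix (Fin J) (Fin J) ℝ) + η • (Dstar - ρ • W)⁻¹).det ^ (-(1 : ℝ) / 2) *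
            (y ⬝ᵥ (((1 : Matrix (Fin J) (Fin J) ℝ) + η • (Dstar - ρ • W)⁻¹)⁻¹ *ᵥ y))
              ^ (-(J : ℝ) / 2))) < ⊤ := by
  classical
  haveI : Nonempty (Fin J) := ⟨⟨0, hJ⟩⟩
  set ρ₁ := (⨅ j, hH.eigenvalues j)⁻¹ with hρ₁def
  set ρ₂ := (⨆ j, hH.eigenvalues j)⁻¹ with hρ₂def
  have hρ₁neg : ρ₁ < 0 := inv_lt_zero.mpr hν1
  have hρ₂pos : 0 < ρ₂ := inv_pos.mpr hνJ
  have hρ12 : ρ₁ < ρ₂ := hρ₁neg.trans hρ₂pos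
  have hstar : ∀ x : Fin J → ℝ, star x = x := fun x => star_trivial x
  -- diagonal entries of Dstar are positive
  have hDentry : ∀ j, 0 < (∑ i, W j i) + d := by
    have h := hDpd
    rw [hDstar] at h
    exact Matrix.posDef_diagonal_iff.mp h
  set s : Fin J → ℝ := fun j => Real.sqrt ((∑ i, W j i) + d) with hsdef
  have hs_pos : ∀ j, 0 < s j := fun j => Real.sqrt_pos.mpr (hDentry j)
  have hs_sq : ∀ j, s j * s j = (∑ i, W j i) + d := fun j => Real.mul_self_sqrt (hDentry j).le
  set S : Matrix (Fin J) (Fin J) ℝ := Matrix.diagonal s with hSdef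
  have hST : Sᵀ = S := by rw [hSdef, Matrix.diagonal_transpose]
  have hSS : S * S = Dstar := by
    rw [hSdef, Matrix.diagonal_mul_diagonal, hDstar]
    exact congrArg Matrix.diagonal (funext hs_sq)
  have hSs : S * Matrix.diagonal (fun j => (s j)⁻¹) = 1 := by
    rw [hSdef, Matrix.diagonal_mul_diagonal]
    have h1 : (fun i => s i * (s i)⁻¹) = fun _ : Fin J => (1:ℝ) :=
      funext fun j => mul_inv_cancel₀ (hs_pos j).ne'
    rw [h1, Matrix.diagonal_one]
  have hsS : Matrix.diagonal (fun j => (s j)⁻¹) * S = 1 := by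
    rw [hSdef, Matrix.diagonal_mul_diagonal]
    have h1 : (fun i => (s i)⁻¹ * s i) = fun _ : Fin J => (1:ℝ) :=
      funext fun j => inv_mul_cancel₀ (hs_pos j).ne'
    rw [h1, Matrix.diagonal_one]
  have hWstar' : Wstar = Matrix.diagonal (fun j => (s j)⁻¹) * W *
      Matrix.diagonal (fun j => (s j)⁻¹) := hWstar
  have hSWS : S * Wstar * S = W := by
    rw [hWstar']
    calc S * (Matrix.diagonal (fun j => (s j)⁻¹) * W * Matrix.diagonal (fun j => (s j)⁻¹)) * S
        = (S * Matrix.diagonal (fun j => (s j)⁻¹)) * W *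
            (Matrix.diagonal (fun j => (s j)⁻¹) * S) := by noncomm_ring
      _ = W := by rw [hSs, hsS, Matrix.one_mul, Matrix.mul_one]
  -- hermitian facts
  have hAherm : ∀ ρ : ℝ, (Dstar - ρ • W).IsHermitian := by
    intro ρ
    apply Matrix.IsHermitian.sub hDpd.1
    rw [Matrix.IsHermitian, Matrix.conjTranspose_eq_transpose_of_trivial,
      Matrix.transpose_smul, hWsym]
  -- positive definiteness on the open interval
  have hPD : ∀ ρ ∈ Set.Ioo ρ₁ ρ₂, (Dstar - ρ • W).PosDef := by
    rintro ρ ⟨hl, hr⟩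
    refine Matrix.PosDef.of_dotProduct_mulVec_pos (hAherm ρ) (fun x hx => ?_)
    rw [hstar x]
    set u : Fin J → ℝ := S *ᵥ x with hu
    have hu0 : u ≠ 0 := by
      intro h0
      apply hx
      funext j
      have hj : s j * x j = 0 := by
        have := congrFun h0 j
        rwa [hu, hSdef, Matrix.mulVec_diagonal] at this
      rcases mul_eq_zero.mp hj with h | h
      · exact absurd h (hs_pos j).ne'
      · exact h
    have hxA : x ⬝ᵥ (Dstar - ρ • W) *ᵥ x = u ⬝ᵥ u - ρ * (u ⬝ᵥ Wstar *ᵥ u) := by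
      rw [CARAux.expand_dot]
      have hDq : x ⬝ᵥ Dstar *ᵥ x = u ⬝ᵥ u := by
        have h2 : S * S = S * 1 * S := by rw [Matrix.mul_one]
        rw [← hSS, h2, CARAux.dot_sym_mul hST, Matrix.one_mulVec]
      have hWq : x ⬝ᵥ W *ᵥ x = u ⬝ᵥ Wstar *ᵥ u := by
        rw [← hSWS, CARAux.dot_sym_mul hST]
      rw [hDq, hWq]
    have hray : ρ * (u ⬝ᵥ Wstar *ᵥ u) ≤
        (max (ρ * ⨅ j, hH.eigenvalues j) (ρ * ⨆ j, hH.eigenvalues j)) * (u ⬝ᵥ u) := by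
      apply CARAux.rayleigh_le hH
      intro i
      rcases le_or_gt 0 ρ with hρ0 | hρ0
      · exact le_max_of_le_right (mul_le_mul_of_nonneg_left
          (le_ciSup (Finite.bddAbove_range _) i) hρ0)
      · exact le_max_of_le_left (mul_le_mul_of_nonpos_left
          (ciInf_le (Finite.bddBelow_range _) i) hρ0.le)
    have hc1 : max (ρ * ⨅ j, hH.eigenvalues j) (ρ * ⨆ j, hH.eigenvalues j) < 1 := by
      apply max_lt
      · have h3 := mul_lt_mul_of_neg_right hl hν1
        rwa [hρ₁def, inv_mul_cancel₀ hν1.ne] at h3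
      · have h3 := mul_lt_mul_of_pos_right hr hνJ
        rwa [hρ₂def, inv_mul_cancel₀ hνJ.ne'] at h3
    have huu : 0 < u ⬝ᵥ u := by
      have h0 : (0:ℝ) ≤ u ⬝ᵥ u := Finset.sum_nonneg fun i _ => mul_self_nonneg _
      exact h0.lt_of_ne fun h => hu0 (dotProduct_self_eq_zero.mp h.symm)
    rw [hxA]
    nlinarith [hray, mul_lt_mul_of_pos_right hc1 huu]
  -- positive semidefiniteness at the endpoints
  have hPSD : ∀ e : ℝ, e = ρ₁ ∨ e = ρ₂ → (Dstar - e • W).PosSemidef := by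
    intro e he
    refine Matrix.PosSemidef.of_dotProduct_mulVec_nonneg (hAherm e) (fun x => ?_)
    rw [hstar x, CARAux.expand_dot]
    have hq : ∀ ρ ∈ Set.Ioo ρ₁ ρ₂, 0 ≤ x ⬝ᵥ Dstar *ᵥ x - ρ * (x ⬝ᵥ W *ᵥ x) := by
      intro ρ hρ
      have h2 := (hPD ρ hρ).posSemidef.dotProduct_mulVec_nonneg x
      rwa [hstar x, CARAux.expand_dot] at h2
    rcases he with rfl | rfl
    · exact CARAux.endpoint_nonneg_left hρ12 hq
    · exact CARAux.endpoint_nonneg_right hρ12 hq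
  -- trace facts
  have hTrW : W.trace = 0 := by
    simp [Matrix.trace, Matrix.diag, hWdiag]
  have hT0 : 0 < Dstar.trace := by
    rw [hDstar, Matrix.trace_diagonal]
    exact Finset.sum_pos (fun j _ => hDentry j) Finset.univ_nonempty
  have htrace : ∀ ρ : ℝ, (Dstar - ρ • W).trace = Dstar.trace := by
    intro ρ
    rw [Matrix.trace_sub, Matrix.trace_smul, hTrW]
    simp
  -- kernels have measure zero
  have hker : ∀ M : Matrix (Fin J) (Fin J) ℝ, M.trace ≠ 0 →
      volume {y : Fin J → ℝ | M *ᵥ y = 0} = 0 := by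
    intro M hM
    have hset : {y : Fin J → ℝ | M *ᵥ y = 0}
        = (LinearMap.ker M.mulVecLin : Set (Fin J → ℝ)) := by
      ext y
      simp [LinearMap.mem_ker]
    rw [hset]
    refine Measure.addHaar_submodule _ _ fun htop => hM ?_
    have hM0 : M = 0 := by
      ext i j
      have hmem : (Pi.single j 1 : Fin J → ℝ) ∈ LinearMap.ker M.mulVecLin :=
        htop ▸ Submodule.mem_top
      have := congrFun (LinearMap.mem_ker.mp hmem) i
      simpa [Matrix.mulVecLin_apply, Matrix.mulVec_single] using this
    rw [hM0]
    simp [Matrix.trace]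
  have hae1 : ∀ᵐ y : Fin J → ℝ, ¬ ((Dstar - ρ₁ • W) *ᵥ y = 0) :=
    measure_eq_zero_iff_ae_notMem.mp (hker _ (by rw [htrace]; exact hT0.ne'))
  have hae2 : ∀ᵐ y : Fin J → ℝ, ¬ ((Dstar - ρ₂ • W) *ᵥ y = 0) :=
    measure_eq_zero_iff_ae_notMem.mp (hker _ (by rw [htrace]; exact hT0.ne'))
  filter_upwards [hae1, hae2] with y hy1 hy2
  -- endpoint quadratic forms are positive for this y
  have hq1 : 0 < y ⬝ᵥ (Dstar - ρ₁ • W) *ᵥ y := by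
    have hps := hPSD ρ₁ (Or.inl rfl)
    have h0 : 0 ≤ y ⬝ᵥ (Dstar - ρ₁ • W) *ᵥ y := by
      have := hps.dotProduct_mulVec_nonneg y
      rwa [hstar y] at this
    refine h0.lt_of_ne fun h => hy1 ?_
    apply (hps.dotProduct_mulVec_zero_iff y).mp
    rw [hstar y]
    exact h.symm
  have hq2 : 0 < y ⬝ᵥ (Dstar - ρ₂ • W) *ᵥ y := by
    have hps := hPSD ρ₂ (Or.inr rfl)
    have h0 : 0 ≤ y ⬝ᵥ (Dstar - ρ₂ • W) *ᵥ y := by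
      have := hps.dotProduct_mulVec_nonneg y
      rwa [hstar y] at this
    refine h0.lt_of_ne fun h => hy2 ?_
    apply (hps.dotProduct_mulVec_zero_iff y).mp
    rw [hstar y]
    exact h.symm
  set c := min (y ⬝ᵥ (Dstar - ρ₁ • W) *ᵥ y) (y ⬝ᵥ (Dstar - ρ₂ • W) *ᵥ y) with hcdef
  have hc : 0 < c := lt_min hq1 hq2
  set T := Dstar.trace with hTdef
  set K := (T / c) ^ ((J:ℝ)/2) with hK
  -- the pointwise bound
  have hbound : ∀ ρ ∈ Set.Ioo ρ₁ ρ₂, ∀ η ∈ Set.Ioi (0:ℝ),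
      ((1 : Matrix (Fin J) (Fin J) ℝ) + η • (Dstar - ρ • W)⁻¹).det ^ (-(1:ℝ)/2) *
        (y ⬝ᵥ (((1 : Matrix (Fin J) (Fin J) ℝ) + η • (Dstar - ρ • W)⁻¹)⁻¹ *ᵥ y))
          ^ (-(J:ℝ)/2) ≤ K := by
    intro ρ hρ η hη
    have hA := hAherm ρ
    have hPDρ := hPD ρ hρ
    have hpos : ∀ i, 0 < hA.eigenvalues i := fun i => hPDρ.eigenvalues_pos i
    have hTi : ∀ i, hA.eigenvalues i ≤ T := by
      intro i
      have hsum : ∑ k, hA.eigenvalues k = T := by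
        rw [← CARAux.trace_eq_sum_eigen hA, htrace]
      rw [← hsum]
      exact Finset.single_le_sum (fun k _ => (hpos k).le) (Finset.mem_univ i)
    have hcy : c ≤ y ⬝ᵥ (Dstar - ρ • W) *ᵥ y := by
      rw [CARAux.expand_dot]
      rcases le_total 0 (y ⬝ᵥ W *ᵥ y) with hb | hb
      · have h5 : ρ * (y ⬝ᵥ W *ᵥ y) ≤ ρ₂ * (y ⬝ᵥ W *ᵥ y) :=
          mul_le_mul_of_nonneg_right hρ.2.le hb
        have h6 : c ≤ y ⬝ᵥ (Dstar - ρ₂ • W) *ᵥ y := min_le_right _ _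
        rw [CARAux.expand_dot] at h6
        linarith
      · have h5 : ρ * (y ⬝ᵥ W *ᵥ y) ≤ ρ₁ * (y ⬝ᵥ W *ᵥ y) :=
          mul_le_mul_of_nonpos_right hρ.1.le hb
        have h6 : c ≤ y ⬝ᵥ (Dstar - ρ₁ • W) *ᵥ y := min_le_left _ _
        rw [CARAux.expand_dot] at h6
        linarith
    have hkey := CARAux.key hA hpos hTi hc (Set.mem_Ioi.mp hη) hcy
    rw [Fintype.card_fin] at hkey
    rw [hK]
    exact hkey
  -- integrability of the dominating function
  have hIntegrable : IntegrableOn (fun η : ℝ => ((1 + η) ^ 2)⁻¹ * K) (Set.Ioi (0:ℝ)) := by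
    apply Integrable.mul_const
    refine Integrable.mono' (g := fun η : ℝ => (1 + η ^ 2)⁻¹)
      (integrable_inv_one_add_sq.restrict) ?_ ?_
    · refine ContinuousOn.aestronglyMeasurable ?_ measurableSet_Ioi
      apply ContinuousOn.inv₀
      · exact ((continuous_const.add continuous_id).pow 2).continuousOn
      · intro x hx
        have hx' : (0:ℝ) < x := hx
        positivity
    · refine (ae_restrict_iff' measurableSet_Ioi).2 (ae_of_all _ fun η hη => ?_)
      have hη : (0:ℝ) < η := hη
      rw [Real.norm_eq_abs, abs_of_nonneg (by positivity)]
      apply inv_anti₀ (by positivity)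
      nlinarith
  have hIfin : (∫⁻ η in Set.Ioi (0:ℝ), ENNReal.ofReal (((1 + η) ^ 2)⁻¹ * K)) < ⊤ :=
    hIntegrable.setLIntegral_lt_top
  calc (∫⁻ ρ in Set.Ioo ρ₁ ρ₂,
        ∫⁻ η in Set.Ioi (0 : ℝ),
          ENNReal.ofReal (((1 + η) ^ 2)⁻¹ *
            ((1 : Matrix (Fin J) (Fin J) ℝ) + η • (Dstar - ρ • W)⁻¹).det ^ (-(1 : ℝ) / 2) *
            (y ⬝ᵥ (((1 : Matrix (Fin J) (Fin J) ℝ) + η • (Dstar - ρ • W)⁻¹)⁻¹ *ᵥ y))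
              ^ (-(J : ℝ) / 2)))
      ≤ ∫⁻ _ρ in Set.Ioo ρ₁ ρ₂,
          (∫⁻ η in Set.Ioi (0:ℝ), ENNReal.ofReal (((1 + η) ^ 2)⁻¹ * K)) := by
        apply lintegral_mono_ae
        refine (ae_restrict_iff' measurableSet_Ioo).2 (ae_of_all _ fun ρ hρ => ?_)
        apply lintegral_mono_ae
        refine (ae_restrict_iff' measurableSet_Ioi).2 (ae_of_all _ fun η hη => ?_)
        apply ENNReal.ofReal_le_ofReal
        rw [mul_assoc]
        exact mul_le_mul_of_nonneg_left (hbound ρ hρ η hη) (by positivity)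
    _ = (∫⁻ η in Set.Ioi (0:ℝ), ENNReal.ofReal (((1 + η) ^ 2)⁻¹ * K))
          * volume (Set.Ioo ρ₁ ρ₂) := setLIntegral_const _ _
    _ < ⊤ := ENNReal.mul_lt_top hIfin
          (by rw [Real.volume_Ioo]; exact ENNReal.ofReal_lt_top)
end
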